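/- Let f : ℝ² → ℝ be a polynomial function with f(0,0) = 0 that has a strict local minimum at the origin, i.e. f(p) > 0 for all p ≠ (0,0) in some neighborhood of the origin. Let I ⊆ ℝ be an open interval containing 0 and γ : ℝ → ℝ² a map that is real-analytic at every point of I, with γ(0) = (0,0), γ(t) ≠ (0,0) for all t ∈ I \ {0}, and ∂f/∂y (γ(t)) = 0 for all t ∈ I. Then there exists δ > 0 with [0, δ] ⊆ I such that the function t ↦ (first coordinate of γ(t)) is strictly monotone on [0, δ], i.e. either strictly increasing or strictly decreasing there. -/
import Mathlib

private lemma aeval_eval_aux (F : MvPolynomial (Fin 2) ℝ) (u : ℝ) :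
    Polynomial.eval u (MvPolynomial.aeval ![(0:Polynomial ℝ), Polynomial.X] F)
      = MvPolynomial.eval ![0, u] F := by
  induction F using MvPolynomial.induction_on with
  | C a => simp
  | add p q hp hq => simp [hp, hq]
  | mul_X p i hp => fin_cases i <;> simp [hp]

/-- Let `f : ℝ² → ℝ` be a polynomial function with `f(0,0) = 0` and a strict local
minimum at the origin, and let `γ` be an analytic parametrisation on an open interval `I ∋ 0` of
a half-branch through the origin of the polar curve `{∂f/∂y = 0}`. Then the first coordinate
`t ↦ (γ t).1` is strictly monotone (strictly increasing or strictly decreasing) on some interval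
`[0, δ] ⊆ I` with `δ > 0`. -/
theorem x_strictly_monotone_on_polar_half_branch (f : ℝ × ℝ → ℝ)
    (hpoly : ∃ F : MvPolynomial (Fin 2) ℝ,
      ∀ q : ℝ × ℝ, f q = MvPolynomial.eval ![q.1, q.2] F)
    (hf0 : f (0, 0) = 0)
    (hmin : ∀ᶠ q in nhds ((0, 0) : ℝ × ℝ), q ≠ (0, 0) → 0 < f q)
    (I : Set ℝ) (a b : ℝ) (ha : a < 0) (hb : 0 < b) (hI : I = Set.Ioo a b)
    (γ : ℝ → ℝ × ℝ) (hγ : ∀ t ∈ I, AnalyticAt ℝ γ t)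
    (hγ0 : γ 0 = (0, 0))
    (hγne : ∀ t ∈ I \ {(0 : ℝ)}, γ t ≠ (0, 0))
    (hpolar : ∀ t ∈ I, deriv (fun y' : ℝ => f ((γ t).1, y')) (γ t).2 = 0) :
    ∃ δ > 0, Set.Icc 0 δ ⊆ I ∧
      (StrictMonoOn (fun t => (γ t).1) (Set.Icc 0 δ) ∨
        StrictAntiOn (fun t => (γ t).1) (Set.Icc 0 δ)) := by
  obtain ⟨F, hF⟩ := hpoly
  have hIopen : IsOpen I := hI ▸ isOpen_Ioo
  have h0I : (0:ℝ) ∈ I := hI ▸ ⟨ha, hb⟩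
  set x : ℝ → ℝ := fun t => (γ t).1 with hxdef
  have hxI : AnalyticOnNhd ℝ x I := fun t ht => analyticAt_fst.comp (hγ t ht)
  have hx' : AnalyticOnNhd ℝ (deriv x) I := hxI.deriv_of_isOpen hIopen
  have hxcont : ContinuousOn x I := fun t ht => (hxI t ht).continuousAt.continuousWithinAt
  have hx'cont : ContinuousOn (deriv x) I := fun t ht => (hx' t ht).continuousAt.continuousWithinAt
  rcases (hx' 0 h0I).eventually_eq_zero_or_eventually_ne_zero with hzero | hne
  · -- Case B : deriv x ≡ 0 near 0, derive a contradiction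
    exfalso
    obtain ⟨ε, hε, hball⟩ := Metric.eventually_nhds_iff.mp hzero
    set δ : ℝ := min (ε/2) (b/2) with hδdef
    have hδpos : 0 < δ := lt_min (by linarith) (by linarith)
    have hδI : Set.Icc 0 δ ⊆ I := by
      rw [hI]
      intro t ht
      have h1 : t ≤ b/2 := le_trans ht.2 (min_le_right _ _)
      exact ⟨lt_of_lt_of_le ha ht.1, by linarith⟩
    -- x is identically 0 on [0, δ]
    have hxconst : ∀ t ∈ Set.Icc 0 δ, x t = 0 := by
      intro t ht
      have h := constant_of_has_deriv_right_zero (f := x) (a := 0) (b := δ)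
        (hxcont.mono hδI) (fun s hs => by
          have hsI : s ∈ I := hδI ⟨hs.1, hs.2.le⟩
          have hd : HasDerivAt x (deriv x s) s := (hxI s hsI).differentiableAt.hasDerivAt
          have hz : deriv x s = 0 := hball (by
            have h1 : s ≤ ε/2 := le_trans hs.2.le (min_le_left _ _)
            have : |s| < ε := by rw [abs_of_nonneg hs.1]; linarith
            simpa [Real.dist_eq] using this)
          exact (hz ▸ hd).hasDerivWithinAt) t ht
      simpa [hxdef, hγ0] using h
    set y : ℝ → ℝ := fun t => (γ t).2 with hydef
    have hycont : ContinuousOn y (Set.Icc 0 δ) :=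
      fun t ht => (analyticAt_snd.comp (hγ t (hδI ht))).continuousAt.continuousWithinAt
    have hy0 : y 0 = 0 := by simp [hydef, hγ0]
    have hyδ : y δ ≠ 0 := by
      intro hc
      have hne' := hγne δ ⟨hδI ⟨hδpos.le, le_refl δ⟩, by simp [hδpos.ne']⟩
      apply hne'
      have hx0 : x δ = 0 := hxconst δ ⟨hδpos.le, le_refl δ⟩
      exact Prod.ext hx0 hc
    -- univariate polynomial P with P.eval u = f (0, u)
    set P : Polynomial ℝ := MvPolynomial.aeval ![(0:Polynomial ℝ), Polynomial.X] F with hPdef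
    have hP : ∀ u : ℝ, P.eval u = f (0, u) := by
      intro u
      rw [hF (0, u)]
      simpa using aeval_eval_aux F u
    -- the derivative of P vanishes at every point y t, t ∈ [0, δ]
    have hroot : ∀ t ∈ Set.Icc 0 δ, P.derivative.eval (y t) = 0 := by
      intro t ht
      have hpol := hpolar t (hδI ht)
      have hx0 : (γ t).1 = 0 := hxconst t ht
      rw [hx0] at hpol
      have heq : (fun y' : ℝ => f (0, y')) = fun y' => P.eval y' := by
        funext u; rw [hP u]
      rw [heq] at hpol
      rw [← Polynomial.deriv]
      exact hpol
    -- by IVT, y takes all values between 0 and y δ, so P' has infinitely many roots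
    have hPd : P.derivative = 0 := by
      apply Polynomial.eq_zero_of_infinite_isRoot
      rcases lt_or_gt_of_ne hyδ with hc | hc
      · apply Set.Infinite.mono (s := Set.Ioo (y δ) 0)
        · intro u hu
          have : u ∈ Set.Icc (y δ) (y 0) := by
            rw [hy0]; exact ⟨hu.1.le, hu.2.le⟩
          have him := intermediate_value_Icc' hδpos.le hycont this
          obtain ⟨t, ht, hyt⟩ := him
          exact hyt ▸ hroot t ht
        · exact Set.Ioo_infinite hc
      · apply Set.Infinite.mono (s := Set.Ioo 0 (y δ))
        · intro u hu
          have : u ∈ Set.Icc (y 0) (y δ) := by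
            rw [hy0]; exact ⟨hu.1.le, hu.2.le⟩
          have him := intermediate_value_Icc hδpos.le hycont this
          obtain ⟨t, ht, hyt⟩ := him
          exact hyt ▸ hroot t ht
        · exact Set.Ioo_infinite hc
    -- hence P is constant, so f (0, u) = 0 for all u, contradicting the strict minimum
    have hPc : ∀ u : ℝ, P.eval u = 0 := by
      intro u
      rw [Polynomial.eq_C_of_derivative_eq_zero hPd]
      have h1 := hP 0
      rw [Polynomial.eq_C_of_derivative_eq_zero hPd] at h1
      simp only [Polynomial.eval_C] at h1 ⊢
      rw [h1, hf0]
    obtain ⟨ε₂, hε₂, hball₂⟩ := Metric.eventually_nhds_iff.mp hmin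
    have hval : (0:ℝ) < f (0, ε₂/2) := by
      apply hball₂
      · simp only [Prod.dist_eq, Real.dist_eq]
        rw [max_lt_iff]
        refine ⟨by simpa using hε₂, ?_⟩
        rw [sub_zero, abs_of_pos (by linarith)]
        linarith
      · simp only [ne_eq, Prod.mk.injEq]
        intro h
        linarith [h.2]
    rw [← hP (ε₂/2), hPc] at hval
    exact lt_irrefl 0 hval
  · -- Case A : deriv x ≠ 0 on a punctured neighbourhood of 0
    rw [eventually_nhdsWithin_iff, Metric.eventually_nhds_iff] at hne
    obtain ⟨ε, hε, hball⟩ := hne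
    set δ : ℝ := min (ε/2) (b/2) with hδdef
    have hδpos : 0 < δ := lt_min (by linarith) (by linarith)
    have hδI : Set.Icc 0 δ ⊆ I := by
      rw [hI]
      intro t ht
      have h1 : t ≤ b/2 := le_trans ht.2 (min_le_right _ _)
      exact ⟨lt_of_lt_of_le ha ht.1, by linarith⟩
    have hnz : ∀ t ∈ Set.Ioo (0:ℝ) δ, deriv x t ≠ 0 := by
      intro t ht
      apply hball
      · have h1 : t ≤ ε/2 := le_trans ht.2.le (min_le_left _ _)
        rw [Real.dist_eq, sub_zero, abs_of_nonneg ht.1.le]; linarith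
      · exact Set.mem_compl_singleton_iff.mpr ht.1.ne'
    have hIooI : Set.Ioo (0:ℝ) δ ⊆ I := fun t ht => hδI ⟨ht.1.le, ht.2.le⟩
    have ht0 : δ/2 ∈ Set.Ioo (0:ℝ) δ := ⟨by linarith, by linarith⟩
    -- deriv x has constant sign on (0, δ)
    have hsign : (∀ t ∈ Set.Ioo (0:ℝ) δ, 0 < deriv x t) ∨
        (∀ t ∈ Set.Ioo (0:ℝ) δ, deriv x t < 0) := by
      rcases lt_or_gt_of_ne (hnz _ ht0) with hneg | hpos
      · right
        intro t ht
        by_contra hle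
        have hpos' : 0 < deriv x t := lt_of_le_of_ne (not_lt.mp hle) (Ne.symm (hnz t ht))
        have hsub : Set.uIcc (δ/2) t ⊆ Set.Ioo (0:ℝ) δ :=
          (Set.ordConnected_Ioo).uIcc_subset ht0 ht
        have him := intermediate_value_uIcc ((hx'cont.mono (hsub.trans hIooI)))
        have h0m : (0:ℝ) ∈ Set.uIcc (deriv x (δ/2)) (deriv x t) :=
          Set.mem_uIcc.mpr (Or.inl ⟨hneg.le, hpos'.le⟩)
        obtain ⟨s, hs, hds⟩ := him h0m
        exact hnz s (hsub hs) hds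
      · left
        intro t ht
        by_contra hle
        have hneg' : deriv x t < 0 := lt_of_le_of_ne (not_lt.mp hle) (hnz t ht)
        have hsub : Set.uIcc (δ/2) t ⊆ Set.Ioo (0:ℝ) δ :=
          (Set.ordConnected_Ioo).uIcc_subset ht0 ht
        have him := intermediate_value_uIcc ((hx'cont.mono (hsub.trans hIooI)))
        have h0m : (0:ℝ) ∈ Set.uIcc (deriv x (δ/2)) (deriv x t) :=
          Set.mem_uIcc.mpr (Or.inr ⟨hneg'.le, hpos.le⟩)
        obtain ⟨s, hs, hds⟩ := him h0m
        exact hnz s (hsub hs) hds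
    refine ⟨δ, hδpos, hδI, ?_⟩
    rcases hsign with hpos | hneg
    · left
      apply strictMonoOn_of_deriv_pos (convex_Icc 0 δ) (hxcont.mono hδI)
      intro t ht
      rw [interior_Icc] at ht
      exact hpos t ht
    · right
      apply strictAntiOn_of_deriv_neg (convex_Icc 0 δ) (hxcont.mono hδI)
      intro t ht
      rw [interior_Icc] at ht
      exact hneg t ht
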